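/- Let A ∈ ℂ^{2×2} be non-diagonalizable with eigenvalue λ, and write A = VJV⁻¹ where V = [[a,b],[c,d]] is invertible and J = [[λ,1],[0,λ]]. Then for every ε > 0, σ_ε(A) is exactly the open disk B(λ, |k|), where |k| = √(Cε + ε²) and C = (|a|² + |c|²)/|ad − bc|. -/

import Mathlib

open Matrix

/-- The operator norm of a matrix, induced by the Euclidean norm. -/
noncomputable def opNorm {n : Type*} [Fintype n] [DecidableEq n]
    (A : Matrix n n ℂ) : ℝ :=
  ‖Matrix.toEuclideanCLM (𝕜 := ℂ) A‖

namespace PseudoAux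

lemma lagrange (a c w u : ℂ) :
    Complex.normSq (w*a - u*(starRingEnd ℂ c)) + Complex.normSq (w*c + u*(starRingEnd ℂ a))
      = (Complex.normSq a + Complex.normSq c) * (Complex.normSq w + Complex.normSq u) := by
  simp only [Complex.normSq_apply, Complex.mul_re, Complex.mul_im, Complex.sub_re,
    Complex.sub_im, Complex.add_re, Complex.add_im, Complex.conj_re, Complex.conj_im]
  ring

lemma L1 (μ k : ℂ) (ε : ℝ) (hε : 0 < ε)
    (hge : ‖k‖ * ε + ε^2 ≤ ‖μ‖ ^ 2) (p q : ℂ) :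
    ε^2 * (‖p‖ ^2 + ‖q‖ ^2) ≤
      ‖μ*p - k*q‖ ^2 + ‖μ‖ ^2 * ‖q‖ ^2 := by
  set K := ‖k‖ with hK
  set t := ‖μ‖ with ht
  set P := ‖p‖
  set Q := ‖q‖
  have hK0 : 0 ≤ K := norm_nonneg _
  have ht0 : 0 ≤ t := norm_nonneg _
  have hP0 : 0 ≤ P := norm_nonneg _
  have hQ0 : 0 ≤ Q := norm_nonneg _
  have h2 : (t*P - K*Q)^2 ≤ ‖μ*p - k*q‖ ^2 := by
    rw [← _root_.sq_abs (t*P - K*Q)]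
    apply pow_le_pow_left₀ (abs_nonneg _)
    have := abs_norm_sub_norm_le (μ*p) (k*q)
    rwa [norm_mul, norm_mul] at this
  have key : ε^2 * (P^2 + Q^2) ≤ (t*P - K*Q)^2 + t^2 * Q^2 := by
    rcases eq_or_lt_of_le hK0 with hK0' | hK0'
    · have hK00 : K = 0 := hK0'.symm
      rw [hK00] at hge ⊢
      nlinarith [sq_nonneg P, sq_nonneg Q]
    · have hd : K*ε ≤ t^2 - ε^2 := by linarith
      have hd0 : 0 < t^2 - ε^2 := lt_of_lt_of_le (by positivity) hd
      have hdd : (ε*K)^2 ≤ (t^2-ε^2)^2 := by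
        apply pow_le_pow_left₀ (by positivity) (by linarith)
      have h3 : 0 ≤ ((t^2-ε^2)^2 - (ε*K)^2) * Q^2 := mul_nonneg (by linarith) (sq_nonneg Q)
      nlinarith [sq_nonneg ((t^2-ε^2)*P - t*K*Q), h3, hd0]
  nlinarith [h2]

lemma L2 (μ k : ℂ) (ε : ℝ) (hε : 0 < ε) (hk : k ≠ 0)
    (hlt : ‖μ‖ ^ 2 < ‖k‖ * ε + ε^2) :
    ∃ p q : ℂ, ‖μ*p - k*q‖ ^2 + ‖μ‖ ^2 * ‖q‖ ^2 <
      ε^2 * (‖p‖ ^2 + ‖q‖ ^2) := by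
  set K := ‖k‖ with hK
  set t := ‖μ‖ with ht
  have hK0 : 0 < K := norm_pos_iff.mpr hk
  have ht0 : 0 ≤ t := norm_nonneg _
  by_cases hcase : t^2 < ε^2
  · exact ⟨1, 0, by simpa using hcase⟩
  · push_neg at hcase
    set m : ℝ := t^2 with hm
    set A : ℝ := K^2 + m - ε^2 with hA
    have hd0 : 0 ≤ m - ε^2 := by linarith
    have hdlt : m - ε^2 < K*ε := by linarith
    have hA0 : 0 < A := by rw [hA]; nlinarith
    have hm0 : 0 < m := by nlinarith
    refine ⟨(starRingEnd ℂ) μ * k * (A:ℂ), ((K^2*m : ℝ):ℂ), ?_⟩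
    have hmc : μ * (starRingEnd ℂ) μ = (m:ℂ) := by
      rw [Complex.mul_conj]; norm_cast; rw [hm, ht, Complex.sq_norm]
    have hAc : (A:ℂ) = (K:ℂ)^2 + (m:ℂ) - (ε:ℂ)^2 := by rw [hA]; push_cast; ring
    have he : μ * ((starRingEnd ℂ) μ * k * (A:ℂ)) - k * ((K^2*m : ℝ):ℂ)
        = k * ((m*(m-ε^2) : ℝ):ℂ) := by
      push_cast
      linear_combination (k * ((A:ℝ):ℂ)) * hmc + (k * (m:ℂ)) * hAc
    rw [he]
    have habs1 : ‖k * ((m*(m-ε^2) : ℝ):ℂ)‖ = K * (m*(m-ε^2)) := by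
      rw [norm_mul, Complex.norm_of_nonneg (by nlinarith : (0:ℝ) ≤ m*(m-ε^2))]
    have habs2 : ‖(starRingEnd ℂ) μ * k * (A:ℂ)‖ = t * K * A := by
      rw [norm_mul, norm_mul, Complex.norm_conj, Complex.norm_of_nonneg hA0.le]
    have habs3 : ‖((K^2*m:ℝ):ℂ)‖ = K^2*m := by
      rw [Complex.norm_of_nonneg (by positivity)]
    rw [habs1, habs2, habs3]
    have h4 : (t*K*A)^2 = m*K^2*A^2 := by rw [hm]; ring
    rw [h4, hA]
    have key2 : m*(m-ε^2)^2 + K^2*m^2 < ε^2*(K^2+(m-ε^2))^2 + ε^2*K^2*m := by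
      nlinarith [mul_pos (mul_pos (show (0:ℝ) < K^2 + (m-ε^2) by positivity)
        (show (0:ℝ) < ε*K - (m-ε^2) by nlinarith)) (show (0:ℝ) < ε*K + (m-ε^2) by positivity)]
    have hpos : (0:ℝ) < K^2*m := by positivity
    nlinarith [mul_lt_mul_of_pos_left key2 hpos]

noncomputable def xv (a c p q : ℂ) : EuclideanSpace ℂ (Fin 2) :=
  (WithLp.equiv 2 (Fin 2 → ℂ)).symm ![p*a - q*(starRingEnd ℂ c), p*c + q*(starRingEnd ℂ a)]

lemma xv0 (a c p q : ℂ) : xv a c p q 0 = p*a - q*(starRingEnd ℂ c) := rfl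
lemma xv1 (a c p q : ℂ) : xv a c p q 1 = p*c + q*(starRingEnd ℂ a) := rfl

lemma toE_apply (M : Matrix (Fin 2) (Fin 2) ℂ) (x : EuclideanSpace ℂ (Fin 2)) (i : Fin 2) :
    (Matrix.toEuclideanCLM (𝕜:=ℂ) M x) i = M.mulVec x i := rfl

lemma mulVec_xv (M : Matrix (Fin 2) (Fin 2) ℂ) (a c p q : ℂ) (i : Fin 2) :
    M.mulVec (xv a c p q) i
      = M i 0 * (p*a - q*(starRingEnd ℂ c)) + M i 1 * (p*c + q*(starRingEnd ℂ a)) := by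
  simp [Matrix.mulVec, dotProduct, Fin.sum_univ_two, xv]

lemma euclid_ext (x y : EuclideanSpace ℂ (Fin 2)) (h0 : x 0 = y 0) (h1 : x 1 = y 1) :
    x = y := by
  ext i; fin_cases i
  exacts [h0, h1]

lemma norm_sq_pair (a c w u : ℂ) (x : EuclideanSpace ℂ (Fin 2))
    (h0 : x 0 = w*a - u*(starRingEnd ℂ c)) (h1 : x 1 = w*c + u*(starRingEnd ℂ a)) :
    ‖x‖^2 = (‖a‖^2 + ‖c‖^2) * (‖w‖^2 + ‖u‖^2) := by
  rw [EuclideanSpace.norm_eq, Real.sq_sqrt (by positivity)]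
  simp only [Fin.sum_univ_two]
  rw [h0, h1, Complex.sq_norm, Complex.sq_norm, lagrange]
  simp [Complex.sq_norm]

end PseudoAux
open Matrix
section
open PseudoAux

set_option maxHeartbeats 1000000 in
theorem pseudospectrum_two_by_two_nondiagonalizable
    (a b c d lam : ℂ) (hdet : a * d - b * c ≠ 0)
    (A : Matrix (Fin 2) (Fin 2) ℂ)
    (hA : A = !![a, b; c, d] * !![lam, 1; 0, lam] * (!![a, b; c, d])⁻¹)
    (ε : ℝ) (hε : 0 < ε) :
    {z : ℂ | ¬ IsUnit (z • (1 : Matrix (Fin 2) (Fin 2) ℂ) - A) ∨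
        opNorm ((z • (1 : Matrix (Fin 2) (Fin 2) ℂ) - A)⁻¹) > 1 / ε} =
      Metric.ball lam
        (Real.sqrt ((‖a‖ ^ 2 + ‖c‖ ^ 2) / ‖a * d - b * c‖ * ε
          + ε ^ 2)) := by
  set δ : ℂ := a*d - b*c with hδdef
  have hδ : δ ≠ 0 := hdet
  set s2 : ℝ := ‖a‖ ^ 2 + ‖c‖ ^ 2 with hs2def
  have hs2 : 0 < s2 := by
    rcases eq_or_ne a 0 with ha | ha
    · have hc : c ≠ 0 := by
        intro hc; apply hδ; rw [hδdef, ha, hc]; ring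
      have h1 : 0 < ‖c‖ := norm_pos_iff.mpr hc
      rw [hs2def]; nlinarith [norm_nonneg a]
    · have h1 : 0 < ‖a‖ := norm_pos_iff.mpr ha
      rw [hs2def]; nlinarith [norm_nonneg c]
  set k : ℂ := (s2:ℂ)/δ with hkdef
  have hk : k ≠ 0 := div_ne_zero (by exact_mod_cast hs2.ne') hδ
  have hKval : ‖k‖ = s2 / ‖δ‖ := by
    rw [hkdef, norm_div, Complex.norm_of_nonneg hs2.le]
  have hs2c : a * (starRingEnd ℂ) a + c * (starRingEnd ℂ) c = (s2:ℂ) := by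
    rw [Complex.mul_conj, Complex.mul_conj, hs2def]
    norm_cast
    rw [Complex.sq_norm, Complex.sq_norm]
  have hVinv : (!![a,b;c,d])⁻¹ = δ⁻¹ • !![d,-b;-c,a] := by
    have hn1 : a*d - b*c ≠ 0 := by rw [← hδdef]; exact hδ
    have hn2 : a*d - c*b ≠ 0 := by rw [mul_comm c b, ← hδdef]; exact hδ
    have hn3 : -(c*b) + a*d ≠ 0 := by rw [neg_add_eq_sub, mul_comm c b, ← hδdef]; exact hδ
    apply inv_eq_right_inv
    ext i j
    fin_cases i <;> fin_cases j <;>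
      (simp [Matrix.mul_apply, Fin.sum_univ_two, Matrix.one_apply, hδdef]; field_simp; ring)
  ext z
  simp only [Set.mem_setOf_eq, Metric.mem_ball, Complex.dist_eq]
  rw [Real.lt_sqrt (norm_nonneg _)]
  set μ : ℂ := z - lam with hμ
  have hM : z • (1 : Matrix (Fin 2) (Fin 2) ℂ) - A =
      !![μ + a*c/δ, -(a^2)/δ; c^2/δ, μ - a*c/δ] := by
    have hn1 : a*d - b*c ≠ 0 := by rw [← hδdef]; exact hδ
    have hn2 : a*d - c*b ≠ 0 := by rw [mul_comm c b, ← hδdef]; exact hδ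
    have hn3 : -(c*b) + a*d ≠ 0 := by rw [neg_add_eq_sub, mul_comm c b, ← hδdef]; exact hδ
    rw [hA, hVinv]
    ext i j
    fin_cases i <;> fin_cases j <;>
      (simp [Matrix.mul_apply, Fin.sum_univ_two, Matrix.one_apply, hμ, hδdef];
       field_simp; ring)
  set M := z • (1 : Matrix (Fin 2) (Fin 2) ℂ) - A with hMdef
  have hdetM : M.det = μ^2 := by
    rw [hM, Matrix.det_fin_two_of]
    field_simp
    ring
  have hUnit : IsUnit M ↔ μ ≠ 0 := by
    rw [Matrix.isUnit_iff_isUnit_det, hdetM, isUnit_iff_ne_zero, pow_ne_zero_iff two_ne_zero]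
  have hMv : ∀ p q : ℂ, Matrix.toEuclideanCLM (𝕜:=ℂ) M (xv a c p q)
      = xv a c (μ*p - k*q) (μ*q) := by
    intro p q
    apply euclid_ext
    · rw [toE_apply, mulVec_xv, hM, xv0]
      simp only [Matrix.cons_val', Matrix.cons_val_zero, Matrix.cons_val_one, Matrix.head_cons,
        Matrix.empty_val', Matrix.cons_val_fin_one, Matrix.head_fin_const, Matrix.of_apply]
      rw [hkdef]
      field_simp
      linear_combination (-(a*q)) * hs2c
    · rw [toE_apply, mulVec_xv, hM, xv1]
      simp only [Matrix.cons_val', Matrix.cons_val_zero, Matrix.cons_val_one, Matrix.head_cons,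
        Matrix.empty_val', Matrix.cons_val_fin_one, Matrix.head_fin_const, Matrix.of_apply]
      rw [hkdef]
      field_simp
      linear_combination (-(c*q)) * hs2c
  have hxnorm : ∀ p q : ℂ, ‖xv a c p q‖^2 = s2 * (‖p‖^2 + ‖q‖^2) := by
    intro p q
    rw [norm_sq_pair a c p q _ (xv0 a c p q) (xv1 a c p q), hs2def]
  have hMnorm : ∀ p q : ℂ, ‖Matrix.toEuclideanCLM (𝕜:=ℂ) M (xv a c p q)‖^2
      = s2 * (‖μ*p - k*q‖^2 + ‖μ‖^2 * ‖q‖^2) := by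
    intro p q
    rw [hMv p q, norm_sq_pair a c (μ*p - k*q) (μ*q) _ (xv0 _ _ _ _) (xv1 _ _ _ _), hs2def]
    rw [norm_mul, mul_pow]
  have hdecomp : ∀ x : EuclideanSpace ℂ (Fin 2), ∃ p q : ℂ, x = xv a c p q := by
    intro x
    refine ⟨((starRingEnd ℂ) a * x 0 + (starRingEnd ℂ) c * x 1)/(s2:ℂ),
      (-c * x 0 + a * x 1)/(s2:ℂ), ?_⟩
    have hs2ne : (s2:ℂ) ≠ 0 := by exact_mod_cast hs2.ne'
    apply euclid_ext
    · rw [xv0]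
      field_simp
      linear_combination (-(x 0)) * hs2c
    · rw [xv1]
      field_simp
      linear_combination (-(x 1)) * hs2c
  constructor
  · rintro (hnu | hop)
    · have hμ0 : μ = 0 := by
        by_contra h; exact hnu (hUnit.mpr h)
      rw [hμ0]
      simp only [norm_zero]
      norm_num
      positivity
    · by_cases hu : IsUnit M
      · have hdetU : IsUnit M.det := (Matrix.isUnit_iff_isUnit_det M).mp hu
        have hop' : 1/ε < ‖Matrix.toEuclideanCLM (𝕜:=ℂ) (M⁻¹)‖ := hop
        have hex : ∃ y : EuclideanSpace ℂ (Fin 2),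
            (1/ε) * ‖y‖ < ‖Matrix.toEuclideanCLM (𝕜:=ℂ) (M⁻¹) y‖ := by
          by_contra hall
          push_neg at hall
          exact absurd (ContinuousLinearMap.opNorm_le_iff (by positivity)
            |>.mpr (fun y => (hall y))) (not_le.mpr hop')
        obtain ⟨y, hy⟩ := hex
        set x := Matrix.toEuclideanCLM (𝕜:=ℂ) (M⁻¹) y with hxdef
        have hx : Matrix.toEuclideanCLM (𝕜:=ℂ) M x = y := by
          rw [hxdef]
          have h1 : Matrix.toEuclideanCLM (𝕜:=ℂ) M (Matrix.toEuclideanCLM (𝕜:=ℂ) (M⁻¹) y)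
              = (Matrix.toEuclideanCLM (𝕜:=ℂ) M * Matrix.toEuclideanCLM (𝕜:=ℂ) (M⁻¹)) y := rfl
          rw [h1, ← _root_.map_mul, Matrix.mul_nonsing_inv _ hdetU, _root_.map_one,
            ContinuousLinearMap.one_apply]
        have hxy : ‖y‖ < ε * ‖x‖ := by
          have := mul_lt_mul_of_pos_left hy hε
          rw [← mul_assoc] at this
          field_simp at this
          linarith
        have hsq : ‖y‖^2 < ε^2 * ‖x‖^2 := by
          have h0 : 0 ≤ ‖y‖ := norm_nonneg _
          nlinarith [hxy]
        obtain ⟨p, q, hpq⟩ := hdecomp x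
        rw [← hx, hpq] at hsq
        rw [hMnorm, hxnorm] at hsq
        have hcore : ‖μ*p - k*q‖^2 + ‖μ‖^2 * ‖q‖^2 <
            ε^2 * (‖p‖^2 + ‖q‖^2) := by
          have h' : s2 * (‖μ*p - k*q‖^2 + ‖μ‖^2 * ‖q‖^2) <
              s2 * (ε^2 * (‖p‖^2 + ‖q‖^2)) := by linarith [hsq]
          exact (mul_lt_mul_iff_right₀ hs2).mp h'
        by_contra hge
        push_neg at hge
        have := L1 μ k ε hε (by rw [hKval]; linarith) p q
        linarith
      · have hμ0 : μ = 0 := by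
          by_contra h; exact hu (hUnit.mpr h)
        rw [hμ0]
        simp only [norm_zero]
        norm_num
        positivity
  · intro h
    by_cases hμ0 : μ = 0
    · left
      rw [hUnit]
      simp [hμ0]
    · right
      have hu : IsUnit M := hUnit.mpr hμ0
      have hdetU : IsUnit M.det := (Matrix.isUnit_iff_isUnit_det M).mp hu
      obtain ⟨p, q, hpq⟩ := L2 μ k ε hε hk (by rw [hKval]; linarith)
      set x := xv a c p q with hxdef
      have hMx2 : ‖Matrix.toEuclideanCLM (𝕜:=ℂ) M x‖^2 < ε^2 * ‖x‖^2 := by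
        rw [hxdef, hMnorm, hxnorm]
        have := (mul_lt_mul_iff_right₀ hs2).mpr hpq
        linarith
      have hx0 : x ≠ 0 := by
        intro h0
        rw [h0] at hMx2
        simp at hMx2
      have hxpos : 0 < ‖x‖ := norm_pos_iff.mpr hx0
      have hMx : ‖Matrix.toEuclideanCLM (𝕜:=ℂ) M x‖ < ε * ‖x‖ := by
        have hb : (0:ℝ) ≤ ε * ‖x‖ := by positivity
        have : ‖Matrix.toEuclideanCLM (𝕜:=ℂ) M x‖^2 < (ε * ‖x‖)^2 := by
          rw [mul_pow]; exact hMx2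
        exact lt_of_pow_lt_pow_left₀ 2 hb this
      set y := Matrix.toEuclideanCLM (𝕜:=ℂ) M x with hydef
      have hinv : Matrix.toEuclideanCLM (𝕜:=ℂ) (M⁻¹) y = x := by
        rw [hydef]
        have h1 : Matrix.toEuclideanCLM (𝕜:=ℂ) (M⁻¹) (Matrix.toEuclideanCLM (𝕜:=ℂ) M x)
            = (Matrix.toEuclideanCLM (𝕜:=ℂ) (M⁻¹) * Matrix.toEuclideanCLM (𝕜:=ℂ) M) x := rfl
        rw [h1, ← _root_.map_mul, Matrix.nonsing_inv_mul _ hdetU, _root_.map_one,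
          ContinuousLinearMap.one_apply]
      have hle := (Matrix.toEuclideanCLM (𝕜:=ℂ) (M⁻¹)).le_opNorm y
      rw [hinv] at hle
      have hN := norm_nonneg (Matrix.toEuclideanCLM (𝕜:=ℂ) (M⁻¹))
      have hN0 : 0 < ‖Matrix.toEuclideanCLM (𝕜:=ℂ) (M⁻¹)‖ := by
        rcases eq_or_lt_of_le hN with h0 | h0
        · exfalso
          rw [← h0] at hle
          simp at hle
          exact hx0 hle
        · exact h0
      have hstep := mul_lt_mul_of_pos_left hMx hN0
      show 1/ε < ‖Matrix.toEuclideanCLM (𝕜:=ℂ) (M⁻¹)‖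
      rw [div_lt_iff₀ hε]
      nlinarith [hle, hstep, hxpos]
end
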